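/- A connected graph G is 2-γ_MB-critical if and only if G is isomorphic to the graph obtained from a star K_{1,n} with n ≥ 1 and center u, together with a disjoint complete bipartite graph K_{2,m} with m ≥ 2 and bipartition {x_1, x_2}, {y_1, …, y_m}, by adding the two edges ux_1 and ux_2. -/

import Mathlib

/-!
Maker–Breaker domination game.  The players Dominator and Staller alternately select
previously unselected vertices of a graph `G`.  Dominator wins if at some point his selected
vertices form a dominating set of `G`; Staller wins if she selects all vertices of the closed
neighbourhood of some vertex.  Below, `D` always denotes the set of vertices selected by
Dominator so far and `S` the set selected by Staller.
-/

namespace MBD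

variable {V : Type*}

/-- `D` is a dominating set of `G`. -/
def IsDomSet (G : SimpleGraph V) (D : Set V) : Prop :=
  ∀ v, v ∈ D ∨ ∃ u ∈ D, G.Adj u v

/-- Dominator is to move.  `DWin G k D S` says that Dominator has a strategy guaranteeing
that his selected set becomes a dominating set of `G` after at most `k` further moves of his
(the game ends when all vertices have been selected). -/
def DWin (G : SimpleGraph V) : ℕ → Set V → Set V → Prop
  | 0, D, _ => IsDomSet G D
  | (k+1), D, S => IsDomSet G D ∨
      ∃ v ∉ D ∪ S,
        (IsDomSet G (insert v D) ∨
          ((∃ w, w ∉ insert v D ∪ S) ∧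
            ∀ w ∉ insert v D ∪ S, DWin G k (insert v D) (insert w S)))

/-- Staller is to move, and Dominator can win using at most `k` further moves of his. -/
def DWinS (G : SimpleGraph V) (k : ℕ) (D S : Set V) : Prop :=
  IsDomSet G D ∨
    ((∃ w, w ∉ D ∪ S) ∧ ∀ w ∉ D ∪ S, DWin G k D (insert w S))

/-- The Maker–Breaker domination number `γ_MB` of `G`: the least `k` such that Dominator,
moving first (D-game), can win within at most `k` of his moves; `∞` if he cannot win. -/
noncomputable def gammaMB (G : SimpleGraph V) : ℕ∞ :=
  sInf (Nat.cast '' {k : ℕ | DWin G k ∅ ∅})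

/-- The Maker–Breaker domination number `γ'_MB` of `G`: the least `k` such that Dominator
can win within at most `k` of his moves in the S-game (Staller moves first); `∞` if he
cannot win. -/
noncomputable def gammaMB' (G : SimpleGraph V) : ℕ∞ :=
  sInf (Nat.cast '' {k : ℕ | DWinS G k ∅ ∅})

/-- Staller has won: she has selected all vertices of the closed neighbourhood `N[v]`
of some vertex `v`. -/
def IsStallerWin (G : SimpleGraph V) (S : Set V) : Prop :=
  ∃ v, v ∈ S ∧ ∀ u, G.Adj v u → u ∈ S

/-- Staller is to move.  `SWin G k D S` says Staller has a strategy to win using at most `k`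
further moves of hers. -/
def SWin (G : SimpleGraph V) : ℕ → Set V → Set V → Prop
  | 0, _, S => IsStallerWin G S
  | (k+1), D, S => IsStallerWin G S ∨
      ∃ v ∉ D ∪ S,
        (IsStallerWin G (insert v S) ∨
          ((∃ w, w ∉ D ∪ insert v S) ∧
            ∀ w ∉ D ∪ insert v S, SWin G k (insert w D) (insert v S)))

/-- Dominator is to move, and Staller can win within at most `k` further moves of hers. -/
def SWinD (G : SimpleGraph V) (k : ℕ) (D S : Set V) : Prop :=
  IsStallerWin G S ∨
    ((∃ w, w ∉ D ∪ S) ∧ ∀ w ∉ D ∪ S, SWin G k (insert w D) S)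

/-- The Staller-Maker–Breaker domination number `γ_SMB` of `G`: the least `k` such that
Staller can win within at most `k` of her moves in the D-game (Dominator starts);
`∞` if she cannot win. -/
noncomputable def gammaSMB (G : SimpleGraph V) : ℕ∞ :=
  sInf (Nat.cast '' {k : ℕ | SWinD G k ∅ ∅})

/-- The Staller-Maker–Breaker domination number `γ'_SMB` of `G`: the least `k` such that
Staller can win within at most `k` of her moves in the S-game (Staller starts);
`∞` if she cannot win. -/
noncomputable def gammaSMB' (G : SimpleGraph V) : ℕ∞ :=
  sInf (Nat.cast '' {k : ℕ | SWin G k ∅ ∅})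

end MBD

open MBD

/-- The graph obtained from a star `K_{1,n}` with centre `u = inl ()` and leaves `Fin n`,
together with a disjoint complete bipartite graph `K_{2,m}` with bipartition
`{x_1, x_2} = Fin 2` and `{y_1, …, y_m} = Fin m`, by adding the edges `u x_1` and `u x_2`. -/
def StarK2m (n m : ℕ) : SimpleGraph (Unit ⊕ (Fin n ⊕ (Fin 2 ⊕ Fin m))) :=
  SimpleGraph.fromRel (fun a b =>
    match a, b with
    | Sum.inl _, Sum.inr (Sum.inl _) => True
    | Sum.inl _, Sum.inr (Sum.inr (Sum.inl _)) => True
    | Sum.inr (Sum.inr (Sum.inl _)), Sum.inr (Sum.inr (Sum.inr _)) => True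
    | _, _ => False)


namespace MBDAux
open MBD

variable {V : Type*}

def Pair (G : SimpleGraph V) : Prop :=
  ∃ u x1 x2 : V, x1 ≠ x2 ∧ x1 ≠ u ∧ x2 ≠ u ∧ IsDomSet G {u, x1} ∧ IsDomSet G {u, x2}

def Dom1 (G : SimpleGraph V) : Prop := IsDomSet G ∅ ∨ ∃ v, IsDomSet G {v}

lemma isDomSet_mono {G G' : SimpleGraph V} (h : G ≤ G') {D : Set V} (hD : IsDomSet G D) :
    IsDomSet G' D := fun v => (hD v).imp id (fun ⟨w, hw, ha⟩ => ⟨w, hw, h ha⟩)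

lemma dwin1_iff (G : SimpleGraph V) : DWin G 1 ∅ ∅ ↔ Dom1 G := by
  constructor
  · rintro (h | ⟨v, hv, h | ⟨⟨w, hw⟩, hall⟩⟩)
    · exact Or.inl h
    · exact Or.inr ⟨v, by simpa using h⟩
    · have := hall w hw
      exact Or.inr ⟨v, by simpa [DWin] using this⟩
  · rintro (h | ⟨v, h⟩)
    · exact Or.inl h
    · exact Or.inr ⟨v, by simp, Or.inl (by simpa using h)⟩

lemma dwin1_aux {G : SimpleGraph V} {v w : V}
    (h : DWin G 1 (insert v ∅) (insert w ∅)) (hnd : ¬ IsDomSet G {v}) :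
    ∃ v2, v2 ≠ v ∧ v2 ≠ w ∧ IsDomSet G {v, v2} := by
  rcases h with h | ⟨v2, hv2, h2⟩
  · exact absurd (by simpa using h) hnd
  · have hv2' : v2 ≠ v ∧ v2 ≠ w := by
      constructor <;> (intro hh; apply hv2; simp [hh])
    have e : insert v2 (insert v (∅ : Set V)) = {v, v2} := by ext x; simp [or_comm]
    rcases h2 with h2 | ⟨⟨w', hw'⟩, hall⟩
    · exact ⟨v2, hv2'.1, hv2'.2, by rwa [e] at h2⟩
    · have h2 := hall w' hw'
      exact ⟨v2, hv2'.1, hv2'.2, by rwa [e] at h2⟩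

lemma dwin2_iff (G : SimpleGraph V) : DWin G 2 ∅ ∅ ↔ Dom1 G ∨ Pair G := by
  constructor
  · rintro (h | ⟨v, hv, h | ⟨⟨w0, hw0⟩, hall⟩⟩)
    · exact Or.inl (Or.inl h)
    · exact Or.inl (Or.inr ⟨v, by simpa using h⟩)
    · by_cases hnd : IsDomSet G {v}
      · exact Or.inl (Or.inr ⟨v, hnd⟩)
      · obtain ⟨xa, hxa1, hxa2, hdoma⟩ := dwin1_aux (hall w0 hw0) hnd
        have hxa : xa ∉ insert v (∅ : Set V) ∪ ∅ := by simp [hxa1]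
        obtain ⟨xb, hxb1, hxb2, hdomb⟩ := dwin1_aux (hall xa hxa) hnd
        exact Or.inr ⟨v, xb, xa, fun h => hxb2 h, hxb1, hxa1, hdomb, hdoma⟩
  · rintro ((h | ⟨v, h⟩) | ⟨u, x1, x2, h12, h1u, h2u, hD1, hD2⟩)
    · exact Or.inl h
    · exact Or.inr ⟨v, by simp, Or.inl (by simpa using h)⟩
    · refine Or.inr ⟨u, by simp, Or.inr ⟨⟨x1, by simp [h1u]⟩, fun w hw => ?_⟩⟩
      by_cases hwx : w = x1
      · refine Or.inr ⟨x2, by simp [h2u, hwx, Ne.symm h12], Or.inl ?_⟩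
        simpa [Set.pair_comm] using hD2
      · refine Or.inr ⟨x1, by simp [h1u, Ne.symm hwx], Or.inl ?_⟩
        simpa [Set.pair_comm] using hD1

lemma dwin0_to1 {G : SimpleGraph V} (h : DWin G 0 ∅ ∅) : DWin G 1 ∅ ∅ :=
  Or.inl h

lemma dwin1_to2 {G : SimpleGraph V} (h : DWin G 1 ∅ ∅) : DWin G 2 ∅ ∅ :=
  (dwin2_iff G).mpr (Or.inl ((dwin1_iff G).mp h))

lemma gammaMB_eq_two_iff (G : SimpleGraph V) :
    gammaMB G = 2 ↔ ¬ Dom1 G ∧ Pair G := by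
  have h01 : ∀ k : ℕ, k ≤ 2 → DWin G k ∅ ∅ → DWin G 2 ∅ ∅ := by
    intro k hk h
    interval_cases k
    · exact dwin1_to2 (dwin0_to1 h)
    · exact dwin1_to2 h
    · exact h
  constructor
  · intro h
    have hn1 : ¬ DWin G 1 ∅ ∅ := by
      intro h1
      have : gammaMB G ≤ 1 := sInf_le ⟨1, h1, rfl⟩
      rw [h] at this
      exact absurd this (by norm_num)
    have h2 : DWin G 2 ∅ ∅ := by
      by_contra h2
      have : (3 : ℕ∞) ≤ gammaMB G := by
        apply le_sInf
        rintro - ⟨k, hk, rfl⟩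
        have : ¬ k ≤ 2 := fun hle => h2 (h01 k hle hk)
        exact_mod_cast by omega
      rw [h] at this
      exact absurd this (by norm_num)
    rcases (dwin2_iff G).mp h2 with hd | hp
    · exact absurd ((dwin1_iff G).mpr hd) hn1
    · exact ⟨fun hd => hn1 ((dwin1_iff G).mpr hd), hp⟩
  · rintro ⟨hnd, hp⟩
    apply le_antisymm
    · exact sInf_le ⟨2, (dwin2_iff G).mpr (Or.inr hp), rfl⟩
    · apply le_sInf
      rintro - ⟨k, hk, rfl⟩
      have : ¬ k ≤ 1 := by
        intro hle
        interval_cases k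
        · exact hnd ((dwin1_iff G).mp (dwin0_to1 hk))
        · exact hnd ((dwin1_iff G).mp hk)
      exact_mod_cast by omega
  
lemma two_lt_gammaMB_iff (G : SimpleGraph V) :
    2 < gammaMB G ↔ ¬ (Dom1 G ∨ Pair G) := by
  rw [← dwin2_iff]
  constructor
  · intro h h2
    exact absurd (sInf_le ⟨2, h2, rfl⟩ : gammaMB G ≤ 2) (not_le.mpr h)
  · intro h2
    have : (3 : ℕ∞) ≤ gammaMB G := by
      apply le_sInf
      rintro - ⟨k, hk, rfl⟩
      have : ¬ k ≤ 2 := by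
        intro hle
        interval_cases k
        · exact h2 (dwin1_to2 (dwin0_to1 hk))
        · exact h2 (dwin1_to2 hk)
        · exact h2 hk
      exact_mod_cast by omega
    exact lt_of_lt_of_le (by norm_num) this


variable {W : Type*} {G : SimpleGraph V} {H : SimpleGraph W}

lemma dom1_mono {G G' : SimpleGraph V} (h : G ≤ G') (hd : Dom1 G) : Dom1 G' :=
  hd.imp (isDomSet_mono h) (fun ⟨v, hv⟩ => ⟨v, isDomSet_mono h hv⟩)

variable {G : SimpleGraph V} {H : SimpleGraph W}

lemma isDomSet_pair_map (f : G ≃g H) (a b : V) (h : IsDomSet G {a, b}) :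
    IsDomSet H {f a, f b} := by
  intro v
  obtain ⟨w, rfl⟩ := f.toEquiv.surjective v
  rcases h w with hw | ⟨c, hc, hadj⟩
  · rcases (by simpa using hw : w = a ∨ w = b) with rfl | rfl <;> simp
  · rcases (by simpa using hc : c = a ∨ c = b) with rfl | rfl
    · exact Or.inr ⟨f c, by simp, f.map_rel_iff.mpr hadj⟩
    · exact Or.inr ⟨f c, by simp, f.map_rel_iff.mpr hadj⟩

lemma isDomSet_single_map (f : G ≃g H) (a : V) (h : IsDomSet G {a}) :
    IsDomSet H {f a} := by
  intro v
  obtain ⟨w, rfl⟩ := f.toEquiv.surjective v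
  rcases h w with hw | ⟨c, hc, hadj⟩
  · rcases (by simpa using hw : w = a) with rfl; simp
  · rcases (by simpa using hc : c = a) with rfl
    exact Or.inr ⟨f c, by simp, f.map_rel_iff.mpr hadj⟩

lemma isDomSet_empty_map (f : G ≃g H) (h : IsDomSet G ∅) : IsDomSet H ∅ := by
  intro v
  obtain ⟨w, rfl⟩ := f.toEquiv.surjective v
  rcases h w with hw | ⟨c, hc, -⟩ <;> simp_all

lemma dom1_map (f : G ≃g H) (h : Dom1 G) : Dom1 H :=
  h.imp (isDomSet_empty_map f) (fun ⟨v, hv⟩ => ⟨f v, isDomSet_single_map f v hv⟩)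

lemma pair_map (f : G ≃g H) (h : Pair G) : Pair H := by
  obtain ⟨u, x1, x2, h12, h1u, h2u, hD1, hD2⟩ := h
  exact ⟨f u, f x1, f x2,
    fun hh => h12 (f.toEquiv.injective hh),
    fun hh => h1u (f.toEquiv.injective hh),
    fun hh => h2u (f.toEquiv.injective hh),
    isDomSet_pair_map f u x1 hD1, isDomSet_pair_map f u x2 hD2⟩

def isoDel (f : G ≃g H) (e : Sym2 V) :
    (G.deleteEdges {e}) ≃g (H.deleteEdges {Sym2.map ⇑f e}) where
  toEquiv := f.toEquiv
  map_rel_iff' := by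
    intro a b
    simp only [SimpleGraph.deleteEdges_adj, Set.mem_singleton_iff]
    rw [show (f.toEquiv a) = f a from rfl, show (f.toEquiv b) = f b from rfl]
    rw [f.map_rel_iff]
    have : s(f a, f b) = Sym2.map ⇑f s(a, b) := (Sym2.map_pair_eq ⇑f a b).symm
    rw [this]
    have hinj : Function.Injective (⇑f) := f.toEquiv.injective
    rw [(Sym2.map.injective hinj).eq_iff]

lemma edge_map (f : G ≃g H) (e : Sym2 V) (he : e ∈ G.edgeSet) :
    Sym2.map ⇑f e ∈ H.edgeSet := by
  induction e using Sym2.ind with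
  | _ a b =>
    rw [Sym2.map_pair_eq, SimpleGraph.mem_edgeSet] at *
    exact f.map_rel_iff.mpr he


end MBDAux

namespace StarAux
open MBD MBDAux

abbrev VK (n m : ℕ) := Unit ⊕ (Fin n ⊕ (Fin 2 ⊕ Fin m))

variable {n m : ℕ}

def vu : VK n m := Sum.inl ()
def vl (i : Fin n) : VK n m := Sum.inr (Sum.inl i)
def vx (i : Fin 2) : VK n m := Sum.inr (Sum.inr (Sum.inl i))
def vy (j : Fin m) : VK n m := Sum.inr (Sum.inr (Sum.inr j))

lemma star_adj (a b : VK n m) : (StarK2m n m).Adj a b ↔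
    ((∃ i, a = vu ∧ b = vl i) ∨ (∃ i, a = vl i ∧ b = vu) ∨
     (∃ i, a = vu ∧ b = vx i) ∨ (∃ i, a = vx i ∧ b = vu) ∨
     (∃ i j, a = vx i ∧ b = vy j) ∨ (∃ i j, a = vy j ∧ b = vx i)) := by
  rcases a with _ | (i | (i | j)) <;> rcases b with _ | (i' | (i' | j')) <;>
    simp [StarK2m, vu, vl, vx, vy, SimpleGraph.fromRel_adj, eq_comm]

lemma star_pair_dom (i : Fin 2) : IsDomSet (StarK2m n m) {vu, vx i} := by
  intro v
  rcases v with _ | (i' | (i' | j'))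
  · exact Or.inl (by simp [vu])
  · exact Or.inr ⟨vu, by simp, (star_adj _ _).mpr (Or.inl ⟨i', rfl, rfl⟩)⟩
  · exact Or.inr ⟨vu, by simp, (star_adj _ _).mpr (Or.inr (Or.inr (Or.inl ⟨i', rfl, rfl⟩)))⟩
  · exact Or.inr ⟨vx i, by simp, (star_adj _ _).mpr
      (Or.inr (Or.inr (Or.inr (Or.inr (Or.inl ⟨i, j', rfl, rfl⟩)))))⟩

lemma star_pair : Pair (StarK2m n m) :=
  ⟨vu, vx 0, vx 1, by simp [vx, Fin.ext_iff], by simp [vx, vu], by simp [vx, vu],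
    star_pair_dom 0, star_pair_dom 1⟩

lemma star_not_dom1 (hn : 1 ≤ n) (hm : 1 ≤ m) : ¬ Dom1 (StarK2m n m) := by
  rintro (h | ⟨v, h⟩)
  · rcases h vu with h' | ⟨w, hw, -⟩ <;> simp_all
  · have key : ∀ t : VK n m, t = v ∨ (StarK2m n m).Adj v t := by
      intro t
      rcases h t with h' | ⟨w, hw, ha⟩
      · exact Or.inl (by simpa using h')
      · have hwv : w = v := by simpa using hw
        exact Or.inr (hwv ▸ ha)
    clear h
    rcases v with _ | (i | (i | j))
    · have := key (vy ⟨0, by omega⟩); simp [star_adj, vu, vl, vx, vy] at this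
    · have := key (vy ⟨0, by omega⟩); simp [star_adj, vu, vl, vx, vy] at this
    · have := key (vl ⟨0, by omega⟩); simp [star_adj, vu, vl, vx, vy] at this
    · have := key (vl ⟨0, by omega⟩); simp [star_adj, vu, vl, vx, vy] at this

lemma star_classify (hn : 1 ≤ n) (hm : 2 ≤ m) {a b : VK n m}
    (h : IsDomSet (StarK2m n m) {a, b}) :
    (a = vu ∧ ∃ i, b = vx i) ∨ (b = vu ∧ ∃ i, a = vx i) := by
  have hdom : ∀ v, (v = a ∨ v = b) ∨ ∃ w, (w = a ∨ w = b) ∧ (StarK2m n m).Adj w v := by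
    intro v
    rcases h v with hv | ⟨w, hw, hadj⟩
    · exact Or.inl (by simpa using hv)
    · exact Or.inr ⟨w, by simpa using hw, hadj⟩
  clear h
  by_cases hau : a = vu
  · subst hau
    left
    refine ⟨rfl, ?_⟩
    have auxy : ∀ j : Fin m, b = vy j ∨ ∃ i, b = vx i := by
      intro j
      rcases hdom (vy j) with (h1 | h1) | ⟨w, (hw | hw), hadj⟩
      · simp [vu, vy] at h1
      · exact Or.inl h1.symm
      · subst hw; simp [star_adj, vu, vl, vx, vy] at hadj
      · subst hw
        rw [star_adj] at hadj
        rcases hadj with ⟨_,_,h1⟩|⟨_,_,h1⟩|⟨_,_,h1⟩|⟨_,_,h1⟩|⟨i,_,hb,_⟩|⟨_,_,_,h1⟩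
        · simp [vy, vl] at h1
        · simp [vy, vu] at h1
        · simp [vy, vx] at h1
        · simp [vy, vu] at h1
        · exact Or.inr ⟨i, hb⟩
        · simp [vy, vx] at h1
    rcases auxy ⟨0, by omega⟩ with h0 | h0
    · rcases auxy ⟨1, by omega⟩ with h1 | h1
      · rw [h0] at h1; simp [vy, Fin.ext_iff] at h1
      · exact h1
    · exact h0
  · by_cases hbu : b = vu
    · subst hbu
      right
      refine ⟨rfl, ?_⟩
      have auxy : ∀ j : Fin m, a = vy j ∨ ∃ i, a = vx i := by
        intro j
        rcases hdom (vy j) with (h1 | h1) | ⟨w, (hw | hw), hadj⟩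
        · exact Or.inl h1.symm
        · simp [vu, vy] at h1
        · subst hw
          rw [star_adj] at hadj
          rcases hadj with ⟨_,_,h1⟩|⟨_,_,h1⟩|⟨_,_,h1⟩|⟨_,_,h1⟩|⟨i,_,ha,_⟩|⟨_,_,_,h1⟩
          · simp [vy, vl] at h1
          · simp [vy, vu] at h1
          · simp [vy, vx] at h1
          · simp [vy, vu] at h1
          · exact Or.inr ⟨i, ha⟩
          · simp [vy, vx] at h1
        · subst hw; simp [star_adj, vu, vl, vx, vy] at hadj
      rcases auxy ⟨0, by omega⟩ with h0 | h0
      · rcases auxy ⟨1, by omega⟩ with h1 | h1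
        · rw [h0] at h1; simp [vy, Fin.ext_iff] at h1
        · exact h1
      · exact h0
    · exfalso
      have hleaf : a = vl ⟨0, hn⟩ ∨ b = vl ⟨0, hn⟩ := by
        rcases hdom (vl ⟨0, hn⟩) with (h1 | h1) | ⟨w, (hw | hw), hadj⟩
        · exact Or.inl h1.symm
        · exact Or.inr h1.symm
        all_goals subst hw
        all_goals rw [star_adj] at hadj
        all_goals rcases hadj with ⟨_,hq,h1⟩|⟨_,_,h1⟩|⟨_,hq,h1⟩|⟨_,_,h1⟩|⟨_,_,_,h1⟩|⟨_,_,_,h1⟩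
        · exact absurd hq hau
        · simp [vl, vu] at h1
        · simp [vl, vx] at h1
        · simp [vl, vu] at h1
        · simp [vl, vy] at h1
        · simp [vl, vx] at h1
        · exact absurd hq hbu
        · simp [vl, vu] at h1
        · simp [vl, vx] at h1
        · simp [vl, vu] at h1
        · simp [vl, vy] at h1
        · simp [vl, vx] at h1
      have hx : ∀ i : Fin 2, (vx i = a ∨ vx i = b) ∨ ∃ j : Fin m, (vy j = a ∨ vy j = b) := by
        intro i
        rcases hdom (vx i) with h1 | ⟨w, (hw | hw), hadj⟩
        · exact Or.inl h1
        all_goals rw [star_adj] at hadj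
        all_goals rcases hadj with ⟨_,hq,h1⟩|⟨_,_,h1⟩|⟨_,hq,h1⟩|⟨_,_,h1⟩|⟨_,_,_,h1⟩|⟨_,j0,hq,h1⟩
        · simp [vx, vl] at h1
        · simp [vx, vu] at h1
        · exact absurd (hw ▸ hq) hau
        · simp [vx, vu] at h1
        · simp [vx, vy] at h1
        · exact Or.inr ⟨j0, Or.inl (hw ▸ hq).symm⟩
        · simp [vx, vl] at h1
        · simp [vx, vu] at h1
        · exact absurd (hw ▸ hq) hbu
        · simp [vx, vu] at h1
        · simp [vx, vy] at h1
        · exact Or.inr ⟨j0, Or.inr (hw ▸ hq).symm⟩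
      rcases hx 0 with hx0 | ⟨j, hyj⟩
      · rcases hx 1 with hx1 | ⟨j, hyj⟩
        · clear hdom hx
          rcases hleaf with hl | hl <;> rcases hx0 with h0 | h0 <;> rcases hx1 with h1 | h1 <;>
            (subst_vars; simp_all [vl, vx, vy, Fin.ext_iff])
        · clear hdom hx
          rcases hleaf with hl | hl <;> rcases hx0 with h0 | h0 <;> rcases hyj with h1 | h1 <;>
            (subst_vars; simp_all [vl, vx, vy, Fin.ext_iff])
      · obtain ⟨j', hj'⟩ : ∃ j' : Fin m, j' ≠ j := by
          by_cases h0 : j = ⟨0, by omega⟩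
          · exact ⟨⟨1, by omega⟩, by rw [h0]; simp [Fin.ext_iff]⟩
          · exact ⟨⟨0, by omega⟩, fun hh => h0 hh.symm⟩
        rcases hdom (vy j') with h1 | ⟨w, hw, hadj⟩
        · clear hdom hx
          rcases hleaf with hl | hl <;> rcases hyj with h0 | h0 <;> rcases h1 with h1 | h1 <;>
            (subst_vars; simp_all [vl, vx, vy, Fin.ext_iff])
        · clear hdom hx
          rcases hleaf with hl | hl <;> rcases hyj with h0 | h0 <;> rcases hw with hw | hw <;>
            (try subst hw) <;> (try subst hl) <;>
            simp_all [star_adj, vu, vl, vx, vy, Fin.ext_iff] <;>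
            (obtain ⟨i2, rfl⟩ := hadj; simp [vx, vy] at h0) <;> (subst_vars; simp_all)


lemma star_crit (hn : 1 ≤ n) (hm : 2 ≤ m) :
    ∀ e ∈ (StarK2m n m).edgeSet, ¬ Pair ((StarK2m n m).deleteEdges {e}) := by
  intro e he hP
  obtain ⟨u', a, b, hab, hau', hbu', h1, h2⟩ := hP
  have h1' : IsDomSet (StarK2m n m) {u', a} :=
    isDomSet_mono (SimpleGraph.deleteEdges_le _) h1
  have h2' : IsDomSet (StarK2m n m) {u', b} :=
    isDomSet_mono (SimpleGraph.deleteEdges_le _) h2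
  rcases star_classify hn hm h1' with ⟨hu, i, hai⟩ | ⟨ha, i, hui⟩
  swap
  · rcases star_classify hn hm h2' with ⟨hu2, _, _⟩ | ⟨hb, _, _⟩
    · rw [hu2] at hui; simp [vu, vx] at hui
    · exact hab (ha.trans hb.symm)
  rcases star_classify hn hm h2' with ⟨-, i', hbi'⟩ | ⟨-, i2, hui2⟩
  swap
  · rw [hu] at hui2; simp [vu, vx] at hui2
  have hii' : i ≠ i' := fun hh => hab (by rw [hai, hbi', hh])
  subst hu hai hbi'
  have hall : ∀ k : Fin 2, IsDomSet ((StarK2m n m).deleteEdges {e}) {vu, vx k} := by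
    intro k
    rcases (by omega : k.val = i.val ∨ k.val = i'.val) with hk | hk
    · rwa [show k = i from Fin.ext hk]
    · rwa [show k = i' from Fin.ext hk]
  clear h1 h2 h1' h2' hii' hau' hbu' hab
  -- analyse the deleted edge
  induction e using Sym2.ind with
  | _ c d =>
  rw [SimpleGraph.mem_edgeSet, star_adj] at he
  have hfin : ∀ i0 : Fin 2, (if i0 = (0 : Fin 2) then (1 : Fin 2) else 0) ≠ i0 := by decide
  have contra : ∀ (k : Fin 2) (t : VK n m), t ≠ vu → t ≠ vx k →
      (∀ w, w = vu ∨ w = vx k → (StarK2m n m).Adj w t → s(w, t) = s(c, d)) → False := by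
    intro k t ht1 ht2 hcov
    rcases hall k t with ht | ⟨w, hw, hadj⟩
    · simp only [Set.mem_insert_iff, Set.mem_singleton_iff] at ht
      tauto
    · rw [SimpleGraph.deleteEdges_adj] at hadj
      simp only [Set.mem_insert_iff, Set.mem_singleton_iff] at hw
      exact hadj.2 (by rw [hcov w hw hadj.1]; simp)
  rcases he with ⟨t, hc, hd⟩ | ⟨t, hc, hd⟩ | ⟨i0, hc, hd⟩ | ⟨i0, hc, hd⟩ |
      ⟨i0, j, hc, hd⟩ | ⟨i0, j, hc, hd⟩ <;> subst hc hd
  · refine contra 0 (vl t) (by simp [vl, vu]) (by simp [vl, vx]) ?_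
    rintro w (rfl | rfl) hadj
    · rfl
    · exfalso; simp [star_adj, vu, vl, vx, vy] at hadj
  · refine contra 0 (vl t) (by simp [vl, vu]) (by simp [vl, vx]) ?_
    rintro w (rfl | rfl) hadj
    · exact Sym2.eq_swap
    · exfalso; simp [star_adj, vu, vl, vx, vy] at hadj
  · refine contra (if i0 = 0 then 1 else 0) (vx i0) (by simp [vx, vu]) ?_ ?_
    · intro hh
      exact hfin i0 (by simpa [vx, Sum.inr.injEq] using hh.symm)
    · rintro w (rfl | rfl) hadj
      · rfl
      · exfalso; simp [star_adj, vu, vl, vx, vy] at hadj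
  · refine contra (if i0 = 0 then 1 else 0) (vx i0) (by simp [vx, vu]) ?_ ?_
    · intro hh
      exact hfin i0 (by simpa [vx, Sum.inr.injEq] using hh.symm)
    · rintro w (rfl | rfl) hadj
      · exact Sym2.eq_swap
      · exfalso; simp [star_adj, vu, vl, vx, vy] at hadj
  · refine contra i0 (vy j) (by simp [vy, vu]) (by simp [vy, vx]) ?_
    rintro w (rfl | rfl) hadj
    · exfalso; simp [star_adj, vu, vl, vx, vy] at hadj
    · rfl
  · refine contra i0 (vy j) (by simp [vy, vu]) (by simp [vy, vx]) ?_
    rintro w (rfl | rfl) hadj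
    · exfalso; simp [star_adj, vu, vl, vx, vy] at hadj
    · exact Sym2.eq_swap

end StarAux

namespace MBDAux
open MBD StarAux

variable {V : Type*}

lemma keep {G : SimpleGraph V} {D : Set V} {p q : V} (hD : IsDomSet G D)
    (hp : p ∉ D) (hq : q ∉ D) : IsDomSet (G.deleteEdges {s(p, q)}) D := by
  intro v
  rcases hD v with hv | ⟨w, hw, hadj⟩
  · exact Or.inl hv
  · refine Or.inr ⟨w, hw, ?_⟩
    rw [SimpleGraph.deleteEdges_adj]
    refine ⟨hadj, ?_⟩
    simp only [Set.mem_singleton_iff, Sym2.eq_iff]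
    rintro (⟨rfl, -⟩ | ⟨rfl, -⟩)
    exacts [hp hw, hq hw]

lemma keep' {G : SimpleGraph V} {D : Set V} {p q r : V} (hD : IsDomSet G D)
    (hpD : p ∈ D) (hq : q ∉ D) (hr : r ∈ D) (hrq : G.Adj r q) (hrp : r ≠ p) :
    IsDomSet (G.deleteEdges {s(p, q)}) D := by
  intro v
  rcases hD v with hv | ⟨w, hw, hadj⟩
  · exact Or.inl hv
  · by_cases hvq : v = q
    · subst hvq
      refine Or.inr ⟨r, hr, ?_⟩
      rw [SimpleGraph.deleteEdges_adj]
      refine ⟨hrq, ?_⟩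
      simp only [Set.mem_singleton_iff, Sym2.eq_iff]
      rintro (⟨h1, -⟩ | ⟨h2, -⟩)
      · exact hrp h1
      · exact (G.ne_of_adj hrq) h2
    · refine Or.inr ⟨w, hw, ?_⟩
      rw [SimpleGraph.deleteEdges_adj]
      refine ⟨hadj, ?_⟩
      simp only [Set.mem_singleton_iff, Sym2.eq_iff]
      rintro (⟨-, h2⟩ | ⟨h1, -⟩)
      · exact hvq h2
      · exact hq (h1 ▸ hw)

lemma keep2 {G : SimpleGraph V} {D : Set V} {p q : V} (hD : IsDomSet G D)
    (hpD : p ∈ D) (hqD : q ∈ D) : IsDomSet (G.deleteEdges {s(p, q)}) D := by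
  intro v
  rcases hD v with hv | ⟨w, hw, hadj⟩
  · exact Or.inl hv
  · by_cases hh : s(w, v) = s(p, q)
    · rcases Sym2.eq_iff.mp hh with ⟨-, rfl⟩ | ⟨-, rfl⟩
      · exact Or.inl hqD
      · exact Or.inl hpD
    · exact Or.inr ⟨w, hw, by rw [SimpleGraph.deleteEdges_adj]; exact ⟨hadj, by simpa using hh⟩⟩

lemma forward [Fintype V] (G : SimpleGraph V) (hG : G.Connected) (hnd : ¬ Dom1 G)
    (hp : Pair G) (hcrit : ∀ e ∈ G.edgeSet, ¬ Pair (G.deleteEdges {e})) :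
    ∃ n m : ℕ, 1 ≤ n ∧ 2 ≤ m ∧ Nonempty (G ≃g StarK2m n m) := by
  classical
  obtain ⟨u, x1, x2, h12, h1u, h2u, hD1, hD2⟩ := hp
  have hd1 : ∀ v, v = u ∨ v = x1 ∨ G.Adj u v ∨ G.Adj x1 v := by
    intro v
    rcases hD1 v with hv | ⟨w, hw, ha⟩
    · rcases (by simpa using hv : v = u ∨ v = x1) with rfl | rfl <;> tauto
    · rcases (by simpa using hw : w = u ∨ w = x1) with rfl | rfl <;> tauto
  have hd2 : ∀ v, v = u ∨ v = x2 ∨ G.Adj u v ∨ G.Adj x2 v := by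
    intro v
    rcases hD2 v with hv | ⟨w, hw, ha⟩
    · rcases (by simpa using hv : v = u ∨ v = x2) with rfl | rfl <;> tauto
    · rcases (by simpa using hw : w = u ∨ w = x2) with rfl | rfl <;> tauto
  -- every edge meets the core {u, x1, x2}
  have F1 : ∀ a b, G.Adj a b → a = u ∨ a = x1 ∨ a = x2 ∨ b = u ∨ b = x1 ∨ b = x2 := by
    intro a b hab
    by_contra hcon
    push_neg at hcon
    obtain ⟨ha1, ha2, ha3, hb1, hb2, hb3⟩ := hcon
    refine hcrit s(a, b) hab ⟨u, x1, x2, h12, h1u, h2u, ?_, ?_⟩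
    · exact keep hD1 (by simp [ha1, ha2]) (by simp [hb1, hb2])
    · exact keep hD2 (by simp [ha1, ha3]) (by simp [hb1, hb3])
  -- neighbours of x1 other than u, x2 are non-neighbours of u
  have F2 : ∀ z, G.Adj x1 z → z ≠ u → z ≠ x2 → ¬ G.Adj u z := by
    intro z hz hzu hzx2 huz
    refine hcrit s(x1, z) hz ⟨u, x1, x2, h12, h1u, h2u, ?_, ?_⟩
    · exact keep' hD1 (by simp) (by simp [hzu, (G.ne_of_adj hz).symm]) (by simp) huz
        (Ne.symm h1u)
    · exact keep hD2 (by simp [h1u, h12]) (by simp [hzu, hzx2])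
  have F2' : ∀ z, G.Adj x2 z → z ≠ u → z ≠ x1 → ¬ G.Adj u z := by
    intro z hz hzu hzx1 huz
    refine hcrit s(x2, z) hz ⟨u, x1, x2, h12, h1u, h2u, ?_, ?_⟩
    · exact keep hD1 (by simp [h2u, Ne.symm h12]) (by simp [hzu, hzx1])
    · exact keep' hD2 (by simp) (by simp [hzu, (G.ne_of_adj hz).symm]) (by simp) huz
        (Ne.symm h2u)
  -- u is adjacent to both x1 and x2
  have caseC : ¬ G.Adj u x1 → ¬ G.Adj u x2 → False := by
    intro hux1 hux2
    have hclosed : ∀ a b, (a = u ∨ G.Adj u a) → G.Adj a b → (b = u ∨ G.Adj u b) := by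
      intro a b ha hab
      rcases ha with rfl | ha
      · exact Or.inr hab
      · have hax2 : a ≠ x2 := fun hh => hux2 (hh ▸ ha)
        have hax1 : a ≠ x1 := fun hh => hux1 (hh ▸ ha)
        have hau : a ≠ u := (G.ne_of_adj ha).symm
        rcases F1 a b hab with rfl | rfl | rfl | rfl | rfl | rfl
        · exact absurd ha G.irrefl
        · exact absurd ha hux1
        · exact absurd ha hux2
        · exact Or.inl rfl
        · exact absurd ha (F2 a hab.symm hau hax2)
        · exact absurd ha (F2' a hab.symm hau hax1)
    obtain ⟨p⟩ := hG.preconnected u x1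
    have hwalk : ∀ (a v : V) (p : G.Walk a v), (a = u ∨ G.Adj u a) → (v = u ∨ G.Adj u v) := by
      intro a v p
      induction p with
      | nil => exact id
      | cons h q ih => intro ha; exact ih (hclosed _ _ ha h)
    rcases hwalk u x1 p (Or.inl rfl) with hh | hh
    · exact h1u hh
    · exact hux1 hh
  have hux1 : G.Adj u x1 := by
    by_contra hux1
    have hx2x1 : G.Adj x2 x1 := by
      rcases hd2 x1 with rfl | hh | hh | hh
      · exact absurd rfl h1u
      · exact absurd hh h12
      · exact absurd hh hux1
      · exact hh
    by_cases hux2 : G.Adj u x2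
    · refine hcrit s(u, x2) hux2 ⟨u, x1, x2, h12, h1u, h2u, ?_, ?_⟩
      · exact keep' hD1 (by simp) (by simp [h2u, Ne.symm h12]) (by simp) hx2x1.symm h1u
      · exact keep2 hD2 (by simp) (by simp)
    · exact caseC hux1 hux2
  have hux2 : G.Adj u x2 := by
    by_contra hux2
    have hx1x2 : G.Adj x1 x2 := by
      rcases hd1 x2 with rfl | hh | hh | hh
      · exact absurd rfl h2u
      · exact absurd hh.symm h12
      · exact absurd hh hux2
      · exact hh
    refine hcrit s(u, x1) hux1 ⟨u, x1, x2, h12, h1u, h2u, ?_, ?_⟩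
    · exact keep2 hD1 (by simp) (by simp)
    · exact keep' hD2 (by simp) (by simp [h1u, h12]) (by simp) hx1x2.symm h2u
  -- x1 and x2 are not adjacent
  have hx1x2 : ¬ G.Adj x1 x2 := by
    intro hadj
    refine hcrit s(x1, x2) hadj ⟨u, x1, x2, h12, h1u, h2u, ?_, ?_⟩
    · exact keep' hD1 (by simp) (by simp [h2u, Ne.symm h12]) (by simp) hux2 (Ne.symm h1u)
    · rw [Sym2.eq_swap]
      exact keep' hD2 (by simp) (by simp [h1u, h12]) (by simp) hux1 (Ne.symm h2u)
  -- vertices outside N[u] are adjacent to both x1 and x2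
  have hY : ∀ v, ¬ G.Adj u v → v ≠ u → G.Adj x1 v ∧ G.Adj x2 v := by
    intro v hva hvu
    constructor
    · rcases hd1 v with rfl | rfl | hh | hh
      · exact absurd rfl hvu
      · exact absurd hux1 hva
      · exact absurd hh hva
      · exact hh
    · rcases hd2 v with rfl | rfl | hh | hh
      · exact absurd rfl hvu
      · exact absurd hux2 hva
      · exact absurd hh hva
      · exact hh
  -- pendant vertices
  have hLnbrs : ∀ v, G.Adj u v → v ≠ x1 → v ≠ x2 → ∀ t, G.Adj v t → t = u := by
    intro v huv hv1 hv2 t hvt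
    rcases F1 v t hvt with rfl | rfl | rfl | rfl | rfl | rfl
    · exact absurd huv (G.irrefl)
    · exact absurd rfl hv1
    · exact absurd rfl hv2
    · rfl
    · exact absurd huv (F2 v hvt.symm (G.ne_of_adj huv).symm hv2)
    · exact absurd huv (F2' v hvt.symm (G.ne_of_adj huv).symm hv1)
  -- Y is independent
  have hYind : ∀ v w, ¬ G.Adj u v → v ≠ u → ¬ G.Adj u w → w ≠ u → ¬ G.Adj v w := by
    intro v w hva hvu hwa hwu hadj
    have hvx1 : v ≠ x1 := fun hh => hva (hh ▸ hux1)
    have hvx2 : v ≠ x2 := fun hh => hva (hh ▸ hux2)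
    have hwx1 : w ≠ x1 := fun hh => hwa (hh ▸ hux1)
    have hwx2 : w ≠ x2 := fun hh => hwa (hh ▸ hux2)
    rcases F1 v w hadj with rfl | rfl | rfl | rfl | rfl | rfl <;> tauto
  -- x1, x2 are not in Y (they are adjacent to u); Y nonempty, in fact ≥ 2
  have hYne : ∃ y, ¬ G.Adj u y ∧ y ≠ u := by
    by_contra hh
    push_neg at hh
    refine hnd (Or.inr ⟨u, fun v => ?_⟩)
    by_cases hv : G.Adj u v
    · exact Or.inr ⟨u, by simp, hv⟩
    · exact Or.inl (by simp [hh v hv])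
  obtain ⟨y0, hy0a, hy0u⟩ := hYne
  have hy0x1 : y0 ≠ x1 := fun hh => hy0a (hh ▸ hux1)
  have hy0x2 : y0 ≠ x2 := fun hh => hy0a (hh ▸ hux2)
  have hYtwo : ∃ y1, (¬ G.Adj u y1 ∧ y1 ≠ u) ∧ y1 ≠ y0 := by
    by_contra hh
    push_neg at hh
    have hDy : IsDomSet G {u, y0} := by
      intro v
      by_cases hv : G.Adj u v
      · exact Or.inr ⟨u, by simp, hv⟩
      · by_cases hvu : v = u
        · exact Or.inl (by simp [hvu])
        · exact Or.inl (by simp [hh v ⟨hv, hvu⟩])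
    have hadjx2y0 : G.Adj x2 y0 := (hY y0 hy0a hy0u).2
    refine hcrit s(x2, y0) hadjx2y0 ⟨u, x1, y0, Ne.symm hy0x1, h1u, hy0u, ?_, ?_⟩
    · exact keep hD1 (by simp [h2u, Ne.symm h12]) (by simp [hy0u, hy0x1])
    · rw [Sym2.eq_swap]
      exact keep' hDy (by simp) (by simp [h2u, Ne.symm hy0x2]) (by simp) hux2
        (Ne.symm hy0u)
  obtain ⟨y1, ⟨hy1a, hy1u⟩, hy10⟩ := hYtwo
  have hy1x1 : y1 ≠ x1 := fun hh => hy1a (hh ▸ hux1)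
  have hy1x2 : y1 ≠ x2 := fun hh => hy1a (hh ▸ hux2)
  -- there is at least one pendant leaf
  have hLne : ∃ l, G.Adj u l ∧ l ≠ x1 ∧ l ≠ x2 := by
    by_contra hh
    push_neg at hh
    have hDx2 : ∀ y, ¬ G.Adj u y → y ≠ u → IsDomSet G {x2, y} := by
      intro y hya hyu v
      by_cases hvu : v = u
      · exact Or.inr ⟨x2, by simp, by rw [hvu]; exact hux2.symm⟩
      · by_cases hva : G.Adj u v
        · by_cases hvx1 : v = x1
          · exact Or.inr ⟨y, by simp, by rw [hvx1]; exact (hY y hya hyu).1.symm⟩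
          · exact Or.inl (by simp [hh v hva hvx1])
        · by_cases hvy : v = y
          · exact Or.inl (by simp [hvy])
          · exact Or.inr ⟨x2, by simp, (hY v hva hvu).2⟩
    refine hcrit s(u, x1) hux1
      ⟨x2, y0, y1, Ne.symm hy10, hy0x2, hy1x2, ?_, ?_⟩
    · exact keep (hDx2 y0 hy0a hy0u) (by simp [Ne.symm h2u, Ne.symm hy0u])
        (by simp [h12, Ne.symm hy0x1])
    · exact keep (hDx2 y1 hy1a hy1u) (by simp [Ne.symm h2u, Ne.symm hy1u])
        (by simp [h12, Ne.symm hy1x1])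
  obtain ⟨l0, hl0a, hl0x1, hl0x2⟩ := hLne
  -- build the isomorphism
  let Lset : Set V := {v | G.Adj u v ∧ v ≠ x1 ∧ v ≠ x2}
  let Yset : Set V := {v | ¬ G.Adj u v ∧ v ≠ u}
  haveI hfL : Fintype ↥Lset := (Set.toFinite Lset).fintype
  haveI hfY : Fintype ↥Yset := (Set.toFinite Yset).fintype
  obtain ⟨nn, ⟨eL⟩⟩ : ∃ k, Nonempty (↥Lset ≃ Fin k) :=
    ⟨Fintype.card ↥Lset, ⟨Fintype.equivFin _⟩⟩
  obtain ⟨mm, ⟨eY⟩⟩ : ∃ k, Nonempty (↥Yset ≃ Fin k) :=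
    ⟨Fintype.card ↥Yset, ⟨Fintype.equivFin _⟩⟩
  refine ⟨nn, mm, ?_, ?_, ?_⟩
  · exact (eL ⟨l0, ⟨hl0a, hl0x1, hl0x2⟩⟩).pos
  · have hne : eY ⟨y1, ⟨hy1a, hy1u⟩⟩ ≠ eY ⟨y0, ⟨hy0a, hy0u⟩⟩ :=
      fun hh => hy10 (congrArg Subtype.val (eY.injective hh))
    have hlt1 := (eY ⟨y1, ⟨hy1a, hy1u⟩⟩).isLt
    have hlt2 := (eY ⟨y0, ⟨hy0a, hy0u⟩⟩).isLt
    have h3 : (eY ⟨y1, ⟨hy1a, hy1u⟩⟩ : Fin mm).val ≠ (eY ⟨y0, ⟨hy0a, hy0u⟩⟩ : Fin mm).val :=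
      fun hh => hne (Fin.ext hh)
    omega
  · let g : StarAux.VK nn mm → V :=
      Sum.elim (fun _ => u) (Sum.elim (fun i => ((eL.symm i : ↥Lset) : V))
        (Sum.elim (fun i => if i = 0 then x1 else x2) (fun j => ((eY.symm j : ↥Yset) : V))))
    have hLa : ∀ i : Fin nn, G.Adj u ((eL.symm i : ↥Lset) : V) := fun i => (eL.symm i).2.1
    have hL1 : ∀ i : Fin nn, ((eL.symm i : ↥Lset) : V) ≠ x1 := fun i => (eL.symm i).2.2.1
    have hL2 : ∀ i : Fin nn, ((eL.symm i : ↥Lset) : V) ≠ x2 := fun i => (eL.symm i).2.2.2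
    have hYa : ∀ j : Fin mm, ¬ G.Adj u ((eY.symm j : ↥Yset) : V) := fun j => (eY.symm j).2.1
    have hYu : ∀ j : Fin mm, ((eY.symm j : ↥Yset) : V) ≠ u := fun j => (eY.symm j).2.2
    have hxadj : ∀ i : Fin 2, G.Adj u (if i = 0 then x1 else x2) := by
      intro i; by_cases hi : i = 0 <;> simp [hi, hux1, hux2]
    have hxu : ∀ i : Fin 2, (if i = 0 then x1 else x2) ≠ u := by
      intro i; by_cases hi : i = 0 <;> simp [hi, h1u, h2u]
    have hxx : ∀ i i' : Fin 2, ¬ G.Adj (if i = 0 then x1 else x2) (if i' = 0 then x1 else x2) := by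
      intro i i' h
      by_cases hi : i = 0 <;> by_cases hi' : i' = 0
      · rw [if_pos hi, if_pos hi'] at h; exact G.irrefl h
      · rw [if_pos hi, if_neg hi'] at h; exact hx1x2 h
      · rw [if_neg hi, if_pos hi'] at h; exact hx1x2 h.symm
      · rw [if_neg hi, if_neg hi'] at h; exact G.irrefl h
    have hxy : ∀ (i : Fin 2) (y : V), ¬ G.Adj u y → y ≠ u →
        G.Adj (if i = 0 then x1 else x2) y := by
      intro i y hy hyu
      by_cases hi : i = 0
      · rw [if_pos hi]; exact (hY y hy hyu).1
      · rw [if_neg hi]; exact (hY y hy hyu).2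
    have hfin2 : ∀ k : Fin 2, k ≠ 0 → k = 1 := by decide
    have hinj : Function.Injective g := by
      intro a b hab
      rcases a with _ | (i | (i | j)) <;> rcases b with _ | (i' | (i' | j'))
      · rfl
      · exact absurd (hab : u = ((eL.symm i' : ↥Lset) : V)) (G.ne_of_adj (hLa i'))
      · exact absurd (hab : u = if i' = 0 then x1 else x2) (G.ne_of_adj (hxadj i'))
      · exact absurd ((hab : u = ((eY.symm j' : ↥Yset) : V)).symm) (hYu j')
      · exact absurd ((hab : ((eL.symm i : ↥Lset) : V) = u).symm) (G.ne_of_adj (hLa i))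
      · rw [eL.symm.injective (Subtype.coe_injective
          (hab : ((eL.symm i : ↥Lset) : V) = ((eL.symm i' : ↥Lset) : V)))]
      · exfalso
        have h : ((eL.symm i : ↥Lset) : V) = if i' = 0 then x1 else x2 := hab
        by_cases hi' : i' = 0
        · rw [if_pos hi'] at h; exact hL1 i h
        · rw [if_neg hi'] at h; exact hL2 i h
      · have h' : ((eL.symm i : ↥Lset) : V) = ((eY.symm j' : ↥Yset) : V) := hab
        refine absurd ?_ (hYa j')
        rw [← h']; exact hLa i
      · exact absurd ((hab : (if i = 0 then x1 else x2) = u)) (hxu i)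
      · exfalso
        have h : (if i = 0 then x1 else x2) = ((eL.symm i' : ↥Lset) : V) := hab
        by_cases hi : i = 0
        · rw [if_pos hi] at h; exact hL1 i' h.symm
        · rw [if_neg hi] at h; exact hL2 i' h.symm
      · have h : (if i = 0 then x1 else x2) = (if i' = 0 then x1 else x2) := hab
        by_cases hi : i = 0 <;> by_cases hi' : i' = 0
        · rw [hi, hi']
        · rw [if_pos hi, if_neg hi'] at h; exact absurd h h12
        · rw [if_neg hi, if_pos hi'] at h; exact absurd h.symm h12
        · rw [hfin2 i hi, hfin2 i' hi']
      · have h' : (if i = 0 then x1 else x2) = ((eY.symm j' : ↥Yset) : V) := hab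
        refine absurd ?_ (hYa j')
        rw [← h']; exact hxadj i
      · exact absurd ((hab : ((eY.symm j : ↥Yset) : V) = u)) (hYu j)
      · have h' : ((eY.symm j : ↥Yset) : V) = ((eL.symm i' : ↥Lset) : V) := hab
        refine absurd ?_ (hYa j)
        rw [h']; exact hLa i'
      · have h' : ((eY.symm j : ↥Yset) : V) = (if i' = 0 then x1 else x2) := hab
        refine absurd ?_ (hYa j)
        rw [h']; exact hxadj i'
      · rw [eY.symm.injective (Subtype.coe_injective
          (hab : ((eY.symm j : ↥Yset) : V) = ((eY.symm j' : ↥Yset) : V)))]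
    have hsurj : Function.Surjective g := by
      intro v
      by_cases hvu : v = u
      · exact ⟨Sum.inl (), hvu.symm⟩
      · by_cases hv1 : v = x1
        · exact ⟨Sum.inr (Sum.inr (Sum.inl 0)), by
            show (if (0 : Fin 2) = 0 then x1 else x2) = v
            rw [if_pos rfl, hv1]⟩
        · by_cases hv2 : v = x2
          · exact ⟨Sum.inr (Sum.inr (Sum.inl 1)), by
              show (if (1 : Fin 2) = 0 then x1 else x2) = v
              rw [if_neg (by decide), hv2]⟩
          · by_cases hva : G.Adj u v
            · exact ⟨Sum.inr (Sum.inl (eL ⟨v, ⟨hva, hv1, hv2⟩⟩)),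
                congrArg Subtype.val (eL.symm_apply_apply ⟨v, ⟨hva, hv1, hv2⟩⟩)⟩
            · exact ⟨Sum.inr (Sum.inr (Sum.inr (eY ⟨v, ⟨hva, hvu⟩⟩))),
                congrArg Subtype.val (eY.symm_apply_apply ⟨v, ⟨hva, hvu⟩⟩)⟩
    have hrel : ∀ a b : StarAux.VK nn mm, G.Adj (g a) (g b) ↔ (StarK2m nn mm).Adj a b := by
      intro a b
      rcases a with ⟨⟩ | (i | (i | j)) <;> rcases b with ⟨⟩ | (i' | (i' | j'))
      · exact iff_of_false (G.irrefl)
          (by simp [StarAux.star_adj, StarAux.vu, StarAux.vl, StarAux.vx, StarAux.vy])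
      · exact iff_of_true (hLa i')
          ((StarAux.star_adj _ _).mpr (Or.inl ⟨i', rfl, rfl⟩))
      · exact iff_of_true (hxadj i')
          ((StarAux.star_adj _ _).mpr (Or.inr (Or.inr (Or.inl ⟨i', rfl, rfl⟩))))
      · exact iff_of_false (hYa j')
          (by simp [StarAux.star_adj, StarAux.vu, StarAux.vl, StarAux.vx, StarAux.vy])
      · exact iff_of_true (hLa i).symm
          ((StarAux.star_adj _ _).mpr (Or.inr (Or.inl ⟨i, rfl, rfl⟩)))
      · exact iff_of_false
          (fun h => Ne.symm (G.ne_of_adj (hLa i'))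
            (hLnbrs _ (hLa i) (hL1 i) (hL2 i) _ h))
          (by simp [StarAux.star_adj, StarAux.vu, StarAux.vl, StarAux.vx, StarAux.vy])
      · exact iff_of_false
          (fun h => hxu i' (hLnbrs _ (hLa i) (hL1 i) (hL2 i) _ h))
          (by simp [StarAux.star_adj, StarAux.vu, StarAux.vl, StarAux.vx, StarAux.vy])
      · exact iff_of_false
          (fun h => hYu j' (hLnbrs _ (hLa i) (hL1 i) (hL2 i) _ h))
          (by simp [StarAux.star_adj, StarAux.vu, StarAux.vl, StarAux.vx, StarAux.vy])
      · exact iff_of_true (hxadj i).symm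
          ((StarAux.star_adj _ _).mpr (Or.inr (Or.inr (Or.inr (Or.inl ⟨i, rfl, rfl⟩)))))
      · exact iff_of_false
          (fun h => hxu i (hLnbrs _ (hLa i') (hL1 i') (hL2 i') _ h.symm))
          (by simp [StarAux.star_adj, StarAux.vu, StarAux.vl, StarAux.vx, StarAux.vy])
      · exact iff_of_false (hxx i i')
          (by simp [StarAux.star_adj, StarAux.vu, StarAux.vl, StarAux.vx, StarAux.vy])
      · exact iff_of_true (hxy i _ (hYa j') (hYu j'))
          ((StarAux.star_adj _ _).mpr
            (Or.inr (Or.inr (Or.inr (Or.inr (Or.inl ⟨i, j', rfl, rfl⟩))))))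
      · exact iff_of_false (fun h => (hYa j) h.symm)
          (by simp [StarAux.star_adj, StarAux.vu, StarAux.vl, StarAux.vx, StarAux.vy])
      · exact iff_of_false
          (fun h => hYu j (hLnbrs _ (hLa i') (hL1 i') (hL2 i') _ h.symm))
          (by simp [StarAux.star_adj, StarAux.vu, StarAux.vl, StarAux.vx, StarAux.vy])
      · exact iff_of_true (hxy i' _ (hYa j) (hYu j)).symm
          ((StarAux.star_adj _ _).mpr
            (Or.inr (Or.inr (Or.inr (Or.inr (Or.inr ⟨i', j, rfl, rfl⟩))))))
      · exact iff_of_false (hYind _ _ (hYa j) (hYu j) (hYa j') (hYu j'))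
          (by simp [StarAux.star_adj, StarAux.vu, StarAux.vl, StarAux.vx, StarAux.vy])
    exact ⟨(SimpleGraph.Iso.symm ⟨Equiv.ofBijective g ⟨hinj, hsurj⟩, fun {a b} => hrel a b⟩)⟩

end MBDAux

/-- A connected (finite) graph `G` is `2`-`γ_MB`-critical if and only if `G` is isomorphic to
the graph obtained from a star `K_{1,n}` (`n ≥ 1`) with centre `u` and a disjoint `K_{2,m}`
(`m ≥ 2`) with bipartition `{x_1, x_2}`, `{y_1, …, y_m}` by adding the edges `u x_1`, `u x_2`. -/
theorem two_gammaMB_critical_iff {V : Type*} [Fintype V]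
    (G : SimpleGraph V) (hG : G.Connected) :
    (gammaMB G = 2 ∧ ∀ e ∈ G.edgeSet, gammaMB G < gammaMB (G.deleteEdges {e})) ↔
      ∃ n m : ℕ, 1 ≤ n ∧ 2 ≤ m ∧ Nonempty (G ≃g StarK2m n m) := by
  constructor
  · rintro ⟨h2, hcrit⟩
    obtain ⟨hnd, hp⟩ := (MBDAux.gammaMB_eq_two_iff G).mp h2
    refine MBDAux.forward G hG hnd hp ?_
    intro e he hp'
    have h3 := hcrit e he
    rw [h2, MBDAux.two_lt_gammaMB_iff] at h3
    exact h3 (Or.inr hp')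
  · rintro ⟨n, m, hn, hm, ⟨f⟩⟩
    have hnd : ¬ MBDAux.Dom1 G :=
      fun h => StarAux.star_not_dom1 hn (by omega) (MBDAux.dom1_map f h)
    have hp : MBDAux.Pair G := MBDAux.pair_map f.symm StarAux.star_pair
    have h2 : gammaMB G = 2 := (MBDAux.gammaMB_eq_two_iff G).mpr ⟨hnd, hp⟩
    refine ⟨h2, fun e he => ?_⟩
    rw [h2, MBDAux.two_lt_gammaMB_iff]
    rintro (hd | hp')
    · exact hnd (MBDAux.dom1_mono (SimpleGraph.deleteEdges_le _) hd)
    · exact StarAux.star_crit hn hm (Sym2.map ⇑f e) (MBDAux.edge_map f e he)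
        (MBDAux.pair_map (MBDAux.isoDel f e) hp')
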